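/- Let x be a circular string of length G over {A,C,G,T} with f_A occurrences of the letter A, and let y be obtained from x by the random substitution process with rate p, with f'_A occurrences of A in y. If G ≠ 4·f_A, then the estimator p̂ = 3·(f'_A − f_A)/(G − 4·f_A) satisfies E[p̂] = p. -/

import Mathlib

open MeasureTheory

noncomputable section

/-- Substitution kernel weight: probability that letter `a` becomes letter `b`
under the rate-`q` substitution process. -/
def substW (q : ℝ) (a b : Fin 4) : ℝ := if b = a then 1 - q else q / 3

/-- The discrete measure on a finite type with weight function `w`. -/
def discMeasure {α : Type*} [Fintype α] [MeasurableSpace α] (w : α → ℝ) : Measure α :=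
  ∑ a : α, ENNReal.ofReal (w a) • Measure.dirac a

/-- Weight of outcome `y` for the rate-`p` substitution process applied to `x`. -/
def mutateW {G : ℕ} (p : ℝ) (x y : Fin G → Fin 4) : ℝ := ∏ i, substW p (x i) (y i)

/-- Distribution of the string obtained from `x` by the random substitution
process with rate `p`: i.i.d. substitutions at every position. -/
def mutate {G : ℕ} (p : ℝ) (x : Fin G → Fin 4) : Measure (Fin G → Fin 4) :=
  discMeasure (mutateW p x)

/-- Number of occurrences of the letter `a` in the string `z`. -/
def countLetter {G : ℕ} (z : Fin G → Fin 4) (a : Fin 4) : ℕ :=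
  (Finset.univ.filter fun i => z i = a).card

-- Auxiliary lemmas ------------------------------------------------------

lemma integral_discMeasure {α : Type*} [Fintype α] [MeasurableSpace α]
    [MeasurableSingletonClass α] (w : α → ℝ) (hw : ∀ a, 0 ≤ w a) (f : α → ℝ) :
    ∫ a, f a ∂(discMeasure w) = ∑ a, w a * f a := by
  have hfin : ∀ a : α, IsFiniteMeasure (ENNReal.ofReal (w a) • Measure.dirac a) := by
    intro a
    constructor
    simp [Measure.smul_apply]
  rw [discMeasure, integral_finset_sum_measure (fun a _ => letI := hfin a; Integrable.of_finite)]
  refine Finset.sum_congr rfl fun a _ => ?_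
  rw [integral_smul_measure, integral_dirac, ENNReal.toReal_ofReal (hw a), smul_eq_mul]

lemma substW_sum (p : ℝ) (a : Fin 4) : ∑ b, substW p a b = 1 := by
  fin_cases a <;> simp [substW, Fin.sum_univ_four] <;> ring

lemma substW_nonneg {p : ℝ} (hp0 : 0 ≤ p) (hp1 : p ≤ 1) (a b : Fin 4) : 0 ≤ substW p a b := by
  unfold substW; split <;> linarith

lemma sum_weight_mul {G : ℕ} (w : Fin G → Fin 4 → ℝ) (hw : ∀ j, ∑ b, w j b = 1)
    (i : Fin G) (h : Fin 4 → ℝ) :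
    ∑ y : Fin G → Fin 4, (∏ j, w j (y j)) * h (y i) = ∑ b, w i b * h b := by
  have key : ∀ y : Fin G → Fin 4,
      (∏ j, w j (y j)) * h (y i) = ∏ j, (w j (y j) * if j = i then h (y j) else 1) := by
    intro y
    rw [Finset.prod_mul_distrib, Finset.prod_ite_eq' Finset.univ i (fun j => h (y j))]
    simp
  simp_rw [key]
  rw [← Fintype.prod_sum (fun j b => w j b * if j = i then h b else 1)]
  have : ∀ j : Fin G, (∑ b, w j b * if j = i then h b else 1)
      = if j = i then ∑ b, w i b * h b else 1 := by
    intro j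
    by_cases hj : j = i <;> simp [hj, hw j]
  simp_rw [this]
  rw [Finset.prod_ite_eq' Finset.univ i (fun _ => ∑ b, w i b * h b)]
  simp

lemma sum_weight {G : ℕ} (w : Fin G → Fin 4 → ℝ) (hw : ∀ j, ∑ b, w j b = 1) :
    ∑ y : Fin G → Fin 4, ∏ j, w j (y j) = 1 := by
  rw [← Fintype.prod_sum w]
  simp [hw]

/-- If `G ≠ 4·f_A`, the estimator
`p̂ = 3·(f'_A − f_A)/(G − 4·f_A)` is unbiased: `E[p̂] = p`. -/
theorem estimator_unbiased {G : ℕ} (x : Fin G → Fin 4) (p : ℝ) (hp0 : 0 ≤ p) (hp1 : p ≤ 1)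
    (hG4 : (G : ℝ) ≠ 4 * (countLetter x 0 : ℝ)) :
    ∫ y, 3 * ((countLetter y 0 : ℝ) - (countLetter x 0 : ℝ))
        / ((G : ℝ) - 4 * (countLetter x 0 : ℝ)) ∂(mutate p x) = p := by
  set f : ℝ := (countLetter x 0 : ℝ)
  set D : ℝ := (G : ℝ) - 4 * f with hD
  have hDne : D ≠ 0 := sub_ne_zero_of_ne hG4
  have hwpos : ∀ y, 0 ≤ mutateW p x y := fun y =>
    Finset.prod_nonneg fun j _ => substW_nonneg hp0 hp1 _ _
  rw [mutate, integral_discMeasure _ hwpos]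
  have hw : ∀ j : Fin G, ∑ b, substW p (x j) b = 1 := fun j => substW_sum p (x j)
  have hcount : ∀ y : Fin G → Fin 4,
      (countLetter y 0 : ℝ) = ∑ i : Fin G, if y i = 0 then (1:ℝ) else 0 := by
    intro y
    rw [countLetter, Finset.card_filter]
    push_cast
    rfl
  have hE : ∑ y : Fin G → Fin 4, mutateW p x y * (countLetter y 0 : ℝ)
      = (G : ℝ) * (p / 3) + (1 - p - p / 3) * f := by
    simp_rw [hcount, Finset.mul_sum]
    rw [Finset.sum_comm]
    have : ∀ i : Fin G, ∑ y : Fin G → Fin 4, mutateW p x y * (if y i = 0 then (1:ℝ) else 0)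
        = substW p (x i) 0 := by
      intro i
      have h0 := sum_weight_mul (fun j => substW p (x j)) hw i
        (fun b => if b = (0 : Fin 4) then (1:ℝ) else 0)
      simpa [mutateW, Fin.sum_univ_four] using h0
    simp_rw [this]
    have hsub : ∀ i : Fin G, substW p (x i) 0 = p/3 + (if x i = 0 then (1:ℝ) else 0) * (1 - p - p/3) := by
      intro i
      have h1 : substW p (x i) 0 = if x i = 0 then 1 - p else p / 3 := by
        unfold substW
        rcases eq_or_ne (x i) 0 with h | h
        · simp [h]
        · simp [h, Ne.symm h]
      rw [h1]
      split_ifs <;> ring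
    simp_rw [hsub]
    rw [Finset.sum_add_distrib, Finset.sum_const, ← Finset.sum_mul, Finset.sum_boole]
    have : ((Finset.univ.filter fun i => x i = 0).card : ℝ) = f := by
      simp [f, countLetter]
    rw [this]
    simp
    ring
  have hE1 : ∑ y : Fin G → Fin 4, mutateW p x y = 1 := sum_weight _ hw
  have hterm : ∀ y : Fin G → Fin 4, mutateW p x y * (3 * ((countLetter y 0 : ℝ) - f) / D)
      = (3 / D) * (mutateW p x y * (countLetter y 0 : ℝ) - mutateW p x y * f) := by
    intro y
    field_simp
  simp_rw [hterm]
  rw [← Finset.mul_sum, Finset.sum_sub_distrib, ← Finset.sum_mul, hE, hE1]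
  field_simp
  ring

end
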